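/- Let P be an irreducible, aperiodic stochastic matrix on finite W and g : W → ℤ. If the set {(g(Q), ℓ(Q)) : Q a closed path} generates ℤ² as a group (where g(Q) = ∑_{k=1}^{ℓ} g(i_k) along path i_0,…,i_ℓ of length ℓ), then for every t with 0 < |t| ≤ π, every eigenvalue λ of the twisted matrix P(e^{it}) (with entries P_{jk} e^{i g(k) t}) satisfies |λ| < 1. -/

import Mathlib

/-- If the pairs (value, length) of closed paths of an irreducible aperiodic finite-state
Markov chain generate `ℤ²`, then for every `0 < |t| ≤ π` all eigenvalues of the twisted
matrix `P(e^{it})` have modulus strictly less than `1`. -/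
theorem statement13 {W : Type*} [Fintype W] [DecidableEq W] (P : Matrix W W ℝ)
    (hnn : ∀ i j, 0 ≤ P i j) (hrow : ∀ i, ∑ j, P i j = 1)
    (hirr : ∀ i j, ∃ n : ℕ, 1 ≤ n ∧ 0 < (P ^ n) i j)
    (g : W → ℤ)
    (haper : AddSubgroup.closure {L : ℤ | ∃ (n : ℕ) (p : ℕ → W), 1 ≤ n ∧
        (∀ k < n, 0 < P (p k) (p (k + 1))) ∧ p n = p 0 ∧ L = n} = ⊤)
    (hgen : AddSubgroup.closure {v : ℤ × ℤ | ∃ (n : ℕ) (p : ℕ → W), 1 ≤ n ∧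
        (∀ k < n, 0 < P (p k) (p (k + 1))) ∧ p n = p 0 ∧
        v = (∑ k ∈ Finset.range n, g (p (k + 1)), (n : ℤ))} = ⊤)
    (t : ℝ) (ht0 : 0 < |t|) (htπ : |t| ≤ Real.pi) (lam : ℂ)
    (hlam : lam ∈ spectrum ℂ
      (Matrix.of fun j k : W => (P j k : ℂ) * Complex.exp (Complex.I * (g k : ℂ) * (t : ℂ)))) :
    ‖lam‖ < 1 := by
  by_contra hcon
  push_neg at hcon
  set M : Matrix W W ℂ :=
    Matrix.of fun j k : W => (P j k : ℂ) * Complex.exp (Complex.I * (g k : ℂ) * (t : ℂ)) with hM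
  -- extract eigenvector
  have hnu : ¬ IsUnit (algebraMap ℂ (Matrix W W ℂ) lam - M) := (spectrum.mem_iff).mp hlam
  have hdet : (algebraMap ℂ (Matrix W W ℂ) lam - M).det = 0 := by
    by_contra hd
    exact hnu ((Matrix.isUnit_iff_isUnit_det _).mpr (isUnit_iff_ne_zero.mpr hd))
  obtain ⟨v, hv0, hveq⟩ := (Matrix.exists_mulVec_eq_zero_iff).mpr hdet
  have eigen : ∀ j : W, ∑ k, (P j k : ℂ) * (Complex.exp (Complex.I * (g k : ℂ) * (t : ℂ)) * v k)
      = lam * v j := by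
    intro j
    have h1 : M.mulVec v = lam • v := by
      have h := hveq
      rw [Matrix.sub_mulVec, sub_eq_zero] at h
      rw [← h, Algebra.algebraMap_eq_smul_one, Matrix.smul_mulVec, Matrix.one_mulVec]
    have h2 := congrFun h1 j
    simp only [Matrix.mulVec, dotProduct, hM, Matrix.of_apply, Pi.smul_apply,
      smul_eq_mul] at h2
    rw [← h2]
    exact Finset.sum_congr rfl fun k _ => by ring
  -- nonempty, max
  obtain ⟨k0, hk0⟩ := Function.ne_iff.mp hv0
  obtain ⟨j₀, -, hj₀⟩ := Finset.exists_max_image Finset.univ (fun k => ‖v k‖)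
    ⟨k0, Finset.mem_univ k0⟩
  set m : ℝ := ‖v j₀‖ with hmdef
  have hm : ∀ k, ‖v k‖ ≤ m := fun k => hj₀ k (Finset.mem_univ k)
  have hm0 : 0 < m := lt_of_lt_of_le (norm_pos_iff.mpr hk0) (hm k0)
  have hexp1 : ∀ k : W, ‖Complex.exp (Complex.I * (g k : ℂ) * (t : ℂ))‖ = 1 := by
    intro k
    rw [Complex.norm_exp]
    have : (Complex.I * (g k : ℂ) * (t : ℂ)).re = 0 := by
      simp [Complex.mul_re, Complex.mul_im]
    rw [this, Real.exp_zero]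
  -- core step lemma
  have step : ∀ j : W, ‖v j‖ = m → ∀ k : W, 0 < P j k →
      Complex.exp (Complex.I * (g k : ℂ) * (t : ℂ)) * v k = lam * v j := by
    intro j hj k hk
    set c : ℂ := lam * v j with hc
    set w : W → ℂ := fun k => Complex.exp (Complex.I * (g k : ℂ) * (t : ℂ)) * v k with hw
    have hsum : ∑ k, (P j k : ℂ) * w k = c := eigen j
    have hwnorm : ∀ k, ‖w k‖ = ‖v k‖ := by
      intro k; rw [hw]; simp only [norm_mul, hexp1 k, one_mul]
    have hre : ∑ k, P j k * (c * (starRingEnd ℂ) (w k)).re = Complex.normSq c := by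
      have h1 : (c * (starRingEnd ℂ) (∑ k, (P j k : ℂ) * w k)).re = Complex.normSq c := by
        rw [hsum, Complex.mul_conj]; simp
      rw [← h1, map_sum, Finset.mul_sum, Complex.re_sum]
      refine Finset.sum_congr rfl fun k _ => ?_
      have cr : ∀ (r : ℝ) (z : ℂ), c * (starRingEnd ℂ) ((r : ℂ) * z)
          = (r : ℂ) * (c * (starRingEnd ℂ) z) := by
        intro r z; rw [map_mul, Complex.conj_ofReal]; ring
      rw [cr, Complex.re_ofReal_mul]
    have key : ∑ k, P j k * Complex.normSq (c - w k) ≤ 0 := by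
      have expand : ∑ k, P j k * Complex.normSq (c - w k)
          = ∑ k, P j k * Complex.normSq (w k) - Complex.normSq c := by
        have e1 : ∀ k, P j k * Complex.normSq (c - w k)
            = Complex.normSq c * P j k + P j k * Complex.normSq (w k)
              - 2 * (P j k * (c * (starRingEnd ℂ) (w k)).re) := by
          intro k; rw [Complex.normSq_sub]; ring
        rw [Finset.sum_congr rfl fun k _ => e1 k, Finset.sum_sub_distrib,
          Finset.sum_add_distrib, ← Finset.mul_sum, ← Finset.mul_sum, hrow j, hre]
        ring
      rw [expand]
      have h2 : ∑ k, P j k * Complex.normSq (w k) ≤ m ^ 2 := by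
        calc ∑ k, P j k * Complex.normSq (w k) ≤ ∑ k, P j k * m ^ 2 := by
              refine Finset.sum_le_sum fun k _ => mul_le_mul_of_nonneg_left ?_ (hnn j k)
              rw [Complex.normSq_eq_norm_sq, hwnorm]
              exact pow_le_pow_left₀ (norm_nonneg _) (hm k) 2
          _ = m ^ 2 := by rw [← Finset.sum_mul, hrow j, one_mul]
      have h3 : m ^ 2 ≤ Complex.normSq c := by
        rw [Complex.normSq_eq_norm_sq, hc, norm_mul, hj]
        have h4 : 1 * 1 ≤ ‖lam‖ * ‖lam‖ := mul_le_mul hcon hcon (by norm_num) (norm_nonneg lam)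
        nlinarith [hm0, h4, sq_nonneg m]
      linarith
    have hnonneg : ∀ i ∈ Finset.univ, (0:ℝ) ≤ P j i * Complex.normSq (c - w i) :=
      fun i _ => mul_nonneg (hnn j i) (Complex.normSq_nonneg _)
    have hsum0 : ∑ k, P j k * Complex.normSq (c - w k) = 0 :=
      le_antisymm key (Finset.sum_nonneg hnonneg)
    have hzero : P j k * Complex.normSq (c - w k) = 0 :=
      (Finset.sum_eq_zero_iff_of_nonneg hnonneg).mp hsum0 k (Finset.mem_univ k)
    have hns : Complex.normSq (c - w k) = 0 := by
      rcases mul_eq_zero.mp hzero with h | h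
      · exact absurd h (ne_of_gt hk)
      · exact h
    have := sub_eq_zero.mp (Complex.normSq_eq_zero.mp hns)
    exact this.symm
  -- ‖lam‖ = 1
  obtain ⟨k1, hk1⟩ : ∃ k, 0 < P j₀ k := by
    by_contra h; push_neg at h
    have : ∑ k, P j₀ k ≤ 0 := Finset.sum_nonpos fun k _ => h k
    rw [hrow j₀] at this; linarith
  have hlam1 : ‖lam‖ = 1 := by
    have h := step j₀ rfl k1 hk1
    have h2 : ‖v k1‖ = ‖lam‖ * m := by
      rw [← one_mul ‖v k1‖, ← hexp1 k1, ← norm_mul, h, norm_mul]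
    have := hm k1
    rw [h2] at this
    nlinarith [hcon, hm0]
  have hnormstep : ∀ j : W, ‖v j‖ = m → ∀ k : W, 0 < P j k → ‖v k‖ = m := by
    intro j hj k hk
    have h := step j hj k hk
    have h2 : ‖v k‖ = ‖lam‖ * m := by
      rw [← one_mul ‖v k‖, ← hexp1 k, ← norm_mul, h, norm_mul, hj]
    rw [h2, hlam1, one_mul]
  -- powers nonneg
  have hPn : ∀ (n : ℕ) (i j : W), 0 ≤ (P ^ n) i j := by
    intro n
    induction n with
    | zero =>
      intro i j; rw [pow_zero]
      by_cases h : i = j <;> simp [Matrix.one_apply, h]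
    | succ n ih =>
      intro i j
      rw [pow_succ, Matrix.mul_apply]
      exact Finset.sum_nonneg fun l _ => mul_nonneg (ih i l) (hnn l j)
  have hall : ∀ (n : ℕ) (j k : W), 0 < (P ^ n) j k → ‖v j‖ = m → ‖v k‖ = m := by
    intro n
    induction n with
    | zero =>
      intro j k h hj
      rw [pow_zero, Matrix.one_apply] at h
      by_cases hjk : j = k
      · rw [← hjk]; exact hj
      · simp [hjk] at h
    | succ n ih =>
      intro j k h hj
      rw [pow_succ, Matrix.mul_apply] at h
      obtain ⟨l, -, hl⟩ : ∃ l ∈ Finset.univ, 0 < (P ^ n) j l * P l k := by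
        by_contra hc2; push_neg at hc2
        have : ∑ l, (P ^ n) j l * P l k ≤ 0 :=
          Finset.sum_nonpos fun l hlm => not_lt.mp (by exact fun hh => (hc2 l hlm).not_gt hh)
        linarith
      rcases mul_pos_iff.mp hl with ⟨h1, h2⟩ | ⟨h1, h2⟩
      · exact hnormstep l (ih j l h1 hj) k h2
      · exact absurd h1 (not_lt.mpr (hPn n j l))
  have hallm : ∀ k, ‖v k‖ = m := by
    intro k
    obtain ⟨n, -, hn⟩ := hirr j₀ k
    exact hall n j₀ k hn rfl
  -- path relation
  have pathrel : ∀ (n : ℕ) (p : ℕ → W), (∀ k < n, 0 < P (p k) (p (k + 1))) →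
      Complex.exp (Complex.I * ((∑ k ∈ Finset.range n, g (p (k + 1)) : ℤ) : ℂ) * (t : ℂ))
        * v (p n) = lam ^ n * v (p 0) := by
    intro n
    induction n with
    | zero => intro p _; simp
    | succ n ih =>
      intro p hp
      have hstep := step (p n) (hallm (p n)) (p (n + 1)) (hp n (Nat.lt_succ_self n))
      have hih := ih p fun k hk => hp k (hk.trans (Nat.lt_succ_self n))
      have hsplit : Complex.I * ((∑ k ∈ Finset.range (n + 1), g (p (k + 1)) : ℤ) : ℂ) * (t : ℂ)
          = Complex.I * ((∑ k ∈ Finset.range n, g (p (k + 1)) : ℤ) : ℂ) * (t : ℂ)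
            + Complex.I * ((g (p (n + 1)) : ℤ) : ℂ) * (t : ℂ) := by
        rw [Finset.sum_range_succ]; push_cast; ring
      rw [hsplit, Complex.exp_add, mul_assoc, hstep, mul_left_comm, hih, pow_succ]
      ring
  have hlamne : lam ≠ 0 := by
    intro h; rw [h, norm_zero] at hcon; linarith
  -- subgroup
  set K : AddSubgroup (ℤ × ℤ) :=
    { carrier := {q : ℤ × ℤ | Complex.exp (Complex.I * (q.1 : ℂ) * (t : ℂ)) = lam ^ q.2}
      add_mem' := by
        intro a b ha hb
        simp only [Set.mem_setOf_eq, Prod.fst_add, Prod.snd_add] at *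
        have e : Complex.I * ((a.1 + b.1 : ℤ) : ℂ) * (t : ℂ)
            = Complex.I * (a.1 : ℂ) * (t : ℂ) + Complex.I * (b.1 : ℂ) * (t : ℂ) := by
          push_cast; ring
        rw [e, Complex.exp_add, ha, hb, zpow_add₀ hlamne]
      zero_mem' := by simp
      neg_mem' := by
        intro a ha
        simp only [Set.mem_setOf_eq, Prod.fst_neg, Prod.snd_neg] at *
        have e : Complex.I * ((-a.1 : ℤ) : ℂ) * (t : ℂ)
            = -(Complex.I * (a.1 : ℂ) * (t : ℂ)) := by push_cast; ring
        rw [e, Complex.exp_neg, ha, zpow_neg] } with hK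
  have hsub : {q : ℤ × ℤ | ∃ (n : ℕ) (p : ℕ → W), 1 ≤ n ∧
      (∀ k < n, 0 < P (p k) (p (k + 1))) ∧ p n = p 0 ∧
      q = (∑ k ∈ Finset.range n, g (p (k + 1)), (n : ℤ))} ⊆ (K : Set (ℤ × ℤ)) := by
    rintro q ⟨n, p, -, hp, hclose, rfl⟩
    have h := pathrel n p hp
    rw [hclose] at h
    have hv : v (p 0) ≠ 0 := by
      intro hz
      have := hallm (p 0)
      rw [hz, norm_zero] at this
      linarith
    have h2 : Complex.exp (Complex.I * ((∑ k ∈ Finset.range n, g (p (k + 1)) : ℤ) : ℂ) * (t : ℂ))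
        = lam ^ n := mul_right_cancel₀ hv h
    show Complex.exp (Complex.I * ((∑ k ∈ Finset.range n, g (p (k + 1)) : ℤ) : ℂ) * (t : ℂ))
        = lam ^ ((n : ℤ))
    rw [zpow_natCast]
    exact h2
  have hKmem : ((1 : ℤ), (0 : ℤ)) ∈ K := by
    have hle : AddSubgroup.closure {q : ℤ × ℤ | ∃ (n : ℕ) (p : ℕ → W), 1 ≤ n ∧
        (∀ k < n, 0 < P (p k) (p (k + 1))) ∧ p n = p 0 ∧
        q = (∑ k ∈ Finset.range n, g (p (k + 1)), (n : ℤ))} ≤ K :=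
      (AddSubgroup.closure_le K).mpr hsub
    rw [hgen] at hle
    exact hle (AddSubgroup.mem_top _)
  have hexp : Complex.exp (Complex.I * (t : ℂ)) = 1 := by
    have h := hKmem
    simp only [hK, AddSubgroup.mem_mk, Set.mem_setOf_eq] at h
    simpa using h
  obtain ⟨n, hn⟩ := Complex.exp_eq_one_iff.mp hexp
  have htr : t = n * (2 * Real.pi) := by
    have h2 : Complex.I * (t : ℂ) = Complex.I * ((n : ℂ) * (2 * (Real.pi : ℂ))) := by
      rw [hn]; push_cast; ring
    have h3 := mul_left_cancel₀ Complex.I_ne_zero h2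
    exact_mod_cast h3
  rcases eq_or_ne n 0 with h0 | h0
  · rw [h0] at htr; norm_num at htr; rw [htr] at ht0; simp at ht0
  · have h1 : (1 : ℝ) ≤ |(n : ℝ)| := by
      have := Int.one_le_abs h0
      calc (1:ℝ) ≤ ((|n| : ℤ) : ℝ) := by exact_mod_cast this
        _ = |(n : ℝ)| := by push_cast; rfl
    have hpi := Real.pi_pos
    rw [htr, abs_mul, abs_of_pos (by linarith : (0:ℝ) < 2 * Real.pi)] at htπ
    nlinarith
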